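/- Let f : 2^N → ℝ be monotone and submodular with f(∅) = 0 and fmax > 0, let each element u ∈ N have cost c(u) > 0, and let γ ≥ 1. Let π be a permutation of N such that for every index i with f(π_i | π_{1:i−1}) > 0 and every element u ∈ N one has f(u | π_{1:i−1})/c(u) ≤ γ · f(π_i | π_{1:i−1})/c(π_i). Let S := {π_i : f(π_i | π_{1:i−1}) > 0}. Then f(S) = f(N), and c(S) ≤ γ · (ln(fmax/fmin) + 1) · c(S*) for every S* ⊆ N with f(S*) = f(N). -/

import Mathlib

open Finset

/-- The marginal value `f(u | C) := f({u} ∪ C) - f C`. -/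
def marg {V : Type*} [DecidableEq V] (f : Finset V → ℝ) (u : V) (C : Finset V) : ℝ :=
  f (insert u C) - f C

/-- The prefix `π_{1:i}` of a permutation `π` (0-indexed: the set of the first `i` elements). -/
def pref {V : Type*} [DecidableEq V] {n : ℕ} (π : Fin n → V) (i : ℕ) : Finset V :=
  (Finset.univ.filter fun j : Fin n => (j : ℕ) < i).image π

/-- The marginal coverage `mff_π(π_i) := f(π_i | π_{1:i-1})` of the element at position `i`. -/
def mff {V : Type*} [DecidableEq V] {n : ℕ} (f : Finset V → ℝ) (π : Fin n → V) (i : Fin n) : ℝ :=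
  marg f (π i) (pref π i)

section Aux
variable {V : Type*} [DecidableEq V]

lemma marg_nonneg (f : Finset V → ℝ) (hmono : ∀ A B : Finset V, A ⊆ B → f A ≤ f B)
    (u : V) (A : Finset V) : 0 ≤ marg f u A := by
  have h := hmono A (insert u A) (Finset.subset_insert u A)
  unfold marg; linarith

lemma marg_anti (f : Finset V → ℝ) (hmono : ∀ A B : Finset V, A ⊆ B → f A ≤ f B)
    (hsub : ∀ A B : Finset V, f (A ∪ B) + f (A ∩ B) ≤ f A + f B)
    (u : V) {A B : Finset V} (hAB : A ⊆ B) : marg f u B ≤ marg f u A := by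
  by_cases hu : u ∈ B
  · have h1 : insert u B = B := Finset.insert_eq_self.2 hu
    have h2 : 0 ≤ marg f u A := marg_nonneg f hmono u A
    unfold marg at *; rw [h1]; linarith
  · have h := hsub (insert u A) B
    have h1 : insert u A ∪ B = insert u B := by
      rw [Finset.insert_union, Finset.union_eq_right.2 hAB]
    have h2 : insert u A ∩ B = A := by
      ext x
      simp only [Finset.mem_inter, Finset.mem_insert]
      constructor
      · rintro ⟨(rfl | hx), hxB⟩
        · exact absurd hxB hu
        · exact hx
      · intro hx; exact ⟨Or.inr hx, hAB hx⟩
    rw [h1, h2] at h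
    unfold marg; linarith

lemma union_sub_le_sum (f : Finset V → ℝ) (hmono : ∀ A B : Finset V, A ⊆ B → f A ≤ f B)
    (hsub : ∀ A B : Finset V, f (A ∪ B) + f (A ∩ B) ≤ f A + f B)
    (B : Finset V) (A : Finset V) :
    f (A ∪ B) - f B ≤ ∑ u ∈ A, marg f u B := by
  induction A using Finset.induction_on with
  | empty => simp
  | @insert a A ha ih =>
    rw [Finset.sum_insert ha, Finset.insert_union]
    have h1 : marg f a (A ∪ B) ≤ marg f a B :=
      marg_anti f hmono hsub a Finset.subset_union_right
    have h2 : f (insert a (A ∪ B)) - f (A ∪ B) = marg f a (A ∪ B) := rfl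
    linarith

lemma pref_zero {n : ℕ} (π : Fin n → V) : pref π 0 = ∅ := by
  unfold pref; simp

lemma pref_mono {n : ℕ} (π : Fin n → V) {i j : ℕ} (h : i ≤ j) : pref π i ⊆ pref π j := by
  unfold pref
  apply Finset.image_subset_image
  intro x hx
  simp only [Finset.mem_filter, Finset.mem_univ, true_and] at *
  omega

lemma pref_succ {n : ℕ} (π : Fin n → V) (i : ℕ) (hi : i < n) :
    pref π (i + 1) = insert (π ⟨i, hi⟩) (pref π i) := by
  unfold pref
  ext x
  simp only [Finset.mem_image, Finset.mem_insert, Finset.mem_filter, Finset.mem_univ, true_and]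
  constructor
  · rintro ⟨j, hj, rfl⟩
    rcases Nat.lt_succ_iff_lt_or_eq.mp hj with h | h
    · exact Or.inr ⟨j, h, rfl⟩
    · left; congr 1; exact Fin.ext h
  · rintro (rfl | ⟨j, hj, rfl⟩)
    · exact ⟨⟨i, hi⟩, Nat.lt_succ_self i, rfl⟩
    · exact ⟨j, Nat.lt_succ_of_lt hj, rfl⟩

lemma pref_full [Fintype V] {n : ℕ} (π : Fin n → V) (hsurj : Function.Surjective π) :
    pref π n = Finset.univ := by
  ext x
  simp only [pref, Finset.mem_image, Finset.mem_filter, Finset.mem_univ, true_and, iff_true]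
  obtain ⟨j, rfl⟩ := hsurj x
  exact ⟨j, j.isLt, rfl⟩

lemma abel_sum (q D : ℕ → ℝ) (n : ℕ) :
    ∑ i ∈ range n, q (i + 1) * (D i - D (i + 1))
      = ∑ i ∈ range n, (q (i + 1) - q i) * D i + q 0 * D 0 - q n * D n := by
  induction n with
  | zero => simp
  | succ n ih => rw [Finset.sum_range_succ, Finset.sum_range_succ, ih]; ring

end Aux

noncomputable def runq (gain p : ℕ → ℝ) (γ : ℝ) : ℕ → ℝ :=
  fun i => Nat.rec 0 (fun l Q => if 0 < gain l then max Q (p l / γ) else Q) i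

section Runq
variable {gain p : ℕ → ℝ} {γ : ℝ}

lemma runq_zero : runq gain p γ 0 = 0 := rfl

lemma runq_succ (i : ℕ) :
    runq gain p γ (i + 1)
      = if 0 < gain i then max (runq gain p γ i) (p i / γ) else runq gain p γ i := rfl

lemma runq_succ_le (i : ℕ) : runq gain p γ i ≤ runq gain p γ (i + 1) := by
  rw [runq_succ]
  by_cases hg : 0 < gain i
  · rw [if_pos hg]; exact le_max_left _ _
  · rw [if_neg hg]

lemma runq_nonneg (i : ℕ) : 0 ≤ runq gain p γ i := by
  induction i with
  | zero => exact le_rfl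
  | succ i ih => exact ih.trans (runq_succ_le i)

lemma runq_le {M : ℝ} (hM : 0 ≤ M) (i : ℕ)
    (h : ∀ l, l < i → 0 < gain l → p l / γ ≤ M) : runq gain p γ i ≤ M := by
  induction i with
  | zero => exact hM
  | succ i ih =>
    have ih' : runq gain p γ i ≤ M := ih fun l hl => h l (Nat.lt_succ_of_lt hl)
    rw [runq_succ]
    by_cases hg : 0 < gain i
    · rw [if_pos hg]; exact max_le ih' (h i (Nat.lt_succ_self i) hg)
    · rw [if_neg hg]; exact ih'

lemma le_runq {l i : ℕ} (hl : l < i) (hg : 0 < gain l) : p l / γ ≤ runq gain p γ i := by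
  induction i with
  | zero => omega
  | succ i ih =>
    rcases Nat.lt_succ_iff_lt_or_eq.mp hl with h | h
    · exact (ih h).trans (runq_succ_le i)
    · subst h
      rw [runq_succ, if_pos hg]
      exact le_max_right _ _

end Runq

section Part1
variable {V : Type*} [DecidableEq V]

lemma filter_image_subset_pref {n : ℕ} (π : Fin n → V) (i : ℕ) :
    ((Finset.univ.filter fun j : Fin n => 0 < mff f π j ∧ (j : ℕ) < i).image π) ⊆ pref π i := by
  intro x hx
  simp only [Finset.mem_image, Finset.mem_filter, Finset.mem_univ, true_and] at hx
  obtain ⟨j, ⟨_, hj⟩, rfl⟩ := hx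
  simp only [pref, Finset.mem_image, Finset.mem_filter, Finset.mem_univ, true_and]
  exact ⟨j, hj, rfl⟩

lemma cover_eq (f : Finset V → ℝ) (hmono : ∀ A B : Finset V, A ⊆ B → f A ≤ f B)
    (hsub : ∀ A B : Finset V, f (A ∪ B) + f (A ∩ B) ≤ f A + f B)
    (hf0 : f ∅ = 0) {n : ℕ} (π : Fin n → V) :
    ∀ i : ℕ, i ≤ n →
      f ((Finset.univ.filter fun j : Fin n => 0 < mff f π j ∧ (j : ℕ) < i).image π)
        = f (pref π i) := by
  intro i
  induction i with
  | zero =>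
    intro _
    have h1 : (Finset.univ.filter fun j : Fin n => 0 < mff f π j ∧ (j : ℕ) < 0) = ∅ := by
      apply Finset.filter_false_of_mem
      intro j _
      simp
    rw [h1, pref_zero]
    simp
  | succ i ih =>
    intro hi1
    have hi : i < n := hi1
    have ihe := ih (le_of_lt hi)
    by_cases hpos : 0 < mff f π ⟨i, hi⟩
    · have hT : (Finset.univ.filter fun j : Fin n => 0 < mff f π j ∧ (j : ℕ) < i + 1)
          = insert ⟨i, hi⟩ (Finset.univ.filter fun j : Fin n => 0 < mff f π j ∧ (j : ℕ) < i) := by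
        ext j
        simp only [Finset.mem_filter, Finset.mem_univ, true_and, Finset.mem_insert]
        constructor
        · rintro ⟨hm, hlt⟩
          rcases Nat.lt_succ_iff_lt_or_eq.mp hlt with h | h
          · exact Or.inr ⟨hm, h⟩
          · exact Or.inl (by apply Fin.ext; simpa using h)
        · rintro (rfl | ⟨hm, hlt⟩)
          · exact ⟨hpos, Nat.lt_succ_self _⟩
          · exact ⟨hm, Nat.lt_succ_of_lt hlt⟩
      rw [hT, Finset.image_insert]
      set A := (Finset.univ.filter fun j : Fin n => 0 < mff f π j ∧ (j : ℕ) < i).image π with hA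
      have hAsub : A ⊆ pref π i := filter_image_subset_pref π i
      have h1 : marg f (π ⟨i, hi⟩) (pref π i) ≤ marg f (π ⟨i, hi⟩) A :=
        marg_anti f hmono hsub _ hAsub
      have h2 : f (insert (π ⟨i, hi⟩) A) = f A + marg f (π ⟨i, hi⟩) A := by
        unfold marg; ring
      have h3 : f (insert (π ⟨i, hi⟩) A) ≤ f (pref π (i + 1)) := by
        apply hmono
        rw [pref_succ π i hi]
        exact Finset.insert_subset_insert _ hAsub
      have h4 : f (pref π (i + 1)) = f (pref π i) + mff f π ⟨i, hi⟩ := by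
        rw [pref_succ π i hi]
        have : mff f π ⟨i, hi⟩ = marg f (π ⟨i, hi⟩) (pref π i) := rfl
        rw [this]
        unfold marg; ring
      have hmffeq : mff f π ⟨i, hi⟩ = marg f (π ⟨i, hi⟩) (pref π i) := rfl
      linarith [hmffeq ▸ h1]
    · have hT : (Finset.univ.filter fun j : Fin n => 0 < mff f π j ∧ (j : ℕ) < i + 1)
          = Finset.univ.filter fun j : Fin n => 0 < mff f π j ∧ (j : ℕ) < i := by
        ext j
        simp only [Finset.mem_filter, Finset.mem_univ, true_and]
        constructor
        · rintro ⟨hm, hlt⟩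
          rcases Nat.lt_succ_iff_lt_or_eq.mp hlt with h | h
          · exact ⟨hm, h⟩
          · exfalso
            apply hpos
            have hj : j = (⟨i, hi⟩ : Fin n) := by apply Fin.ext; simpa using h
            rwa [hj] at hm
        · rintro ⟨hm, hlt⟩
          exact ⟨hm, Nat.lt_succ_of_lt hlt⟩
      have hmff0 : mff f π ⟨i, hi⟩ = 0 :=
        le_antisymm (not_lt.mp hpos) (marg_nonneg f hmono _ _)
      have h4 : f (pref π (i + 1)) = f (pref π i) + mff f π ⟨i, hi⟩ := by
        rw [pref_succ π i hi]
        have : mff f π ⟨i, hi⟩ = marg f (π ⟨i, hi⟩) (pref π i) := rfl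
        rw [this]
        unfold marg; ring
      rw [hT, ihe, h4, hmff0, add_zero]

end Part1

noncomputable def gainF {V : Type*} [DecidableEq V] (f : Finset V → ℝ) {n : ℕ}
    (π : Fin n → V) : ℕ → ℝ :=
  fun i => if h : i < n then mff f π ⟨i, h⟩ else 0

noncomputable def priceF {V : Type*} [DecidableEq V] (f : Finset V → ℝ) {n : ℕ}
    (π : Fin n → V) (c : V → ℝ) : ℕ → ℝ :=
  fun i => if h : i < n then c (π ⟨i, h⟩) / mff f π ⟨i, h⟩ else 0

noncomputable def phiF (fmin x : ℝ) : ℝ := if fmin ≤ x then Real.log (x / fmin) + 1 else 0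

section Step
variable {V : Type*} [DecidableEq V]

lemma gainF_nonneg (f : Finset V → ℝ) (hmono : ∀ A B : Finset V, A ⊆ B → f A ≤ f B)
    {n : ℕ} (π : Fin n → V) (i : ℕ) : 0 ≤ gainF f π i := by
  unfold gainF
  by_cases h : i < n
  · rw [dif_pos h]; exact marg_nonneg f hmono _ _
  · rw [dif_neg h]

lemma step_bound (f : Finset V → ℝ) (hmono : ∀ A B : Finset V, A ⊆ B → f A ≤ f B)
    (hsub : ∀ A B : Finset V, f (A ∪ B) + f (A ∩ B) ≤ f A + f B)
    {n : ℕ} (π : Fin n → V) (c : V → ℝ) (hc : ∀ u : V, 0 < c u)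
    {γ : ℝ} (hγpos : 0 < γ)
    {fmin : ℝ} (hfminpos : 0 < fmin)
    (hfmin_le : ∀ (u : V) (S : Finset V), 0 < marg f u S → fmin ≤ marg f u S)
    (hgreedy : ∀ i : Fin n, 0 < mff f π i →
      ∀ u : V, marg f u (pref π i) / c u ≤ γ * (mff f π i / c (π i)))
    (u : V) (i : ℕ) :
    runq (gainF f π) (priceF f π c) γ (i + 1) * (marg f u (pref π i) - marg f u (pref π (i + 1)))
      ≤ c u * (phiF fmin (marg f u (pref π i)) - phiF fmin (marg f u (pref π (i + 1)))) := by
  set a := marg f u (pref π i) with hadef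
  set b := marg f u (pref π (i + 1)) with hbdef
  have hba : b ≤ a := marg_anti f hmono hsub u (pref_mono π (Nat.le_succ i))
  have hb : 0 ≤ b := marg_nonneg f hmono u _
  by_cases hapos : 0 < a
  · have hamin : fmin ≤ a := hfmin_le u _ hapos
    -- q (i+1) ≤ c u / a
    have hqle : runq (gainF f π) (priceF f π c) γ (i + 1) ≤ c u / a := by
      apply runq_le (div_nonneg (hc u).le hapos.le)
      intro l hl hgl
      have hln : l < n := by
        by_contra h
        rw [gainF, dif_neg h] at hgl
        exact lt_irrefl 0 hgl
      rw [gainF, dif_pos hln] at hgl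
      have hgr := hgreedy ⟨l, hln⟩ hgl u
      have hal : a ≤ marg f u (pref π l) := by
        rw [hadef]
        exact marg_anti f hmono hsub u (pref_mono π (Nat.lt_succ_iff.mp hl))
      have hprefeq : pref π ((⟨l, hln⟩ : Fin n) : ℕ) = pref π l := rfl
      rw [hprefeq] at hgr
      have h1 : a / c u ≤ γ * (mff f π ⟨l, hln⟩ / c (π ⟨l, hln⟩)) :=
        le_trans ((div_le_div_iff_of_pos_right (hc u)).mpr hal) hgr
      have h2 : a / c u ≤ (γ * mff f π ⟨l, hln⟩) / c (π ⟨l, hln⟩) := by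
        rwa [mul_div_assoc]
      have h3 : a * c (π ⟨l, hln⟩) ≤ γ * mff f π ⟨l, hln⟩ * c u :=
        (div_le_div_iff₀ (hc u) (hc _)).mp h2
      rw [priceF, dif_pos hln, div_div, div_le_div_iff₀ (by positivity) hapos]
      nlinarith
    have h4 : runq (gainF f π) (priceF f π c) γ (i + 1) * (a - b) ≤ (c u / a) * (a - b) :=
      mul_le_mul_of_nonneg_right hqle (by linarith)
    refine h4.trans ?_
    by_cases hbpos : 0 < b
    · have hbmin : fmin ≤ b := hfmin_le u _ hbpos
      rw [phiF, phiF, if_pos hamin, if_pos hbmin]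
      have hblog : Real.log b - Real.log a ≤ b / a - 1 := by
        have h := Real.log_le_sub_one_of_pos (div_pos hbpos hapos)
        rwa [Real.log_div (ne_of_gt hbpos) (ne_of_gt hapos)] at h
      have hfa : Real.log (a / fmin) = Real.log a - Real.log fmin :=
        Real.log_div (ne_of_gt hapos) (ne_of_gt hfminpos)
      have hfb : Real.log (b / fmin) = Real.log b - Real.log fmin :=
        Real.log_div (ne_of_gt hbpos) (ne_of_gt hfminpos)
      rw [hfa, hfb]
      have h5 : (c u / a) * (a - b) = c u * (1 - b / a) := by
        field_simp
      have h6 : c u * (1 - b / a) ≤ c u * (Real.log a - Real.log b) :=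
        mul_le_mul_of_nonneg_left (by linarith) (hc u).le
      rw [h5]
      refine h6.trans (le_of_eq ?_)
      ring
    · have hb0 : b = 0 := le_antisymm (not_lt.mp hbpos) hb
      rw [phiF, phiF, if_pos hamin, if_neg (by rw [hb0]; exact not_le.mpr hfminpos)]
      have h5 : (c u / a) * (a - b) = c u - c u * b / a := by
        field_simp
      have hlog : 0 ≤ Real.log (a / fmin) :=
        Real.log_nonneg ((one_le_div hfminpos).mpr hamin)
      have hbfrac : 0 ≤ c u * b / a := div_nonneg (mul_nonneg (hc u).le hb) hapos.le
      rw [h5]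
      have : c u * (Real.log (a / fmin) + 1 - 0) = c u * Real.log (a / fmin) + c u := by ring
      rw [this]
      nlinarith [(hc u).le]
  · have ha0 : a = 0 := le_antisymm (not_lt.mp hapos) (hb.trans hba)
    have hb0 : b = 0 := le_antisymm (ha0 ▸ hba) hb
    rw [ha0, hb0]
    simp

end Step

/-- If `π` is an approximate-greedy stack trace for cost-scaled coverage (every element `u` has
`f(u | π_{1:i-1})/c(u) ≤ γ · f(π_i | π_{1:i-1})/c(π_i)` whenever `f(π_i | π_{1:i-1}) > 0`),
then the set `S` of elements of positive marginal coverage fully covers, and its cost is at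
most `γ (ln(fmax/fmin) + 1)` times the cost of any full cover `S*`. -/
theorem greedy_trace_competitive_weighted {V : Type*} [Fintype V] [DecidableEq V] [Nonempty V]
    (f : Finset V → ℝ)
    (hmono : ∀ A B : Finset V, A ⊆ B → f A ≤ f B)
    (hsub : ∀ A B : Finset V, f (A ∪ B) + f (A ∩ B) ≤ f A + f B)
    (hf0 : f ∅ = 0)
    (c : V → ℝ) (hc : ∀ u : V, 0 < c u)
    (γ : ℝ) (hγ : 1 ≤ γ)
    (fmax fmin : ℝ)
    (hfmax : fmax = Finset.univ.sup' Finset.univ_nonempty (fun u : V => marg f u ∅))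
    (hfmaxpos : 0 < fmax)
    (hfmin_le : ∀ (u : V) (S : Finset V), 0 < marg f u S → fmin ≤ marg f u S)
    (hfmin_mem : ∃ (u : V) (S : Finset V), 0 < marg f u S ∧ marg f u S = fmin)
    (π : Fin (Fintype.card V) ≃ V)
    (hgreedy : ∀ i : Fin (Fintype.card V), 0 < mff f π i →
      ∀ u : V, marg f u (pref π i) / c u ≤ γ * (mff f π i / c (π i))) :
    f ((Finset.univ.filter fun i : Fin (Fintype.card V) => 0 < mff f π i).image π)
        = f Finset.univ ∧
    ∀ Sstar : Finset V, f Sstar = f Finset.univ →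
      ∑ u ∈ (Finset.univ.filter fun i : Fin (Fintype.card V) => 0 < mff f π i).image π, c u
        ≤ γ * (Real.log (fmax / fmin) + 1) * ∑ u ∈ Sstar, c u := by
  classical
  have hγpos : 0 < γ := lt_of_lt_of_le one_pos hγ
  obtain ⟨u₀, S₀, hu₀pos, hu₀eq⟩ := hfmin_mem
  have hfminpos : 0 < fmin := hu₀eq ▸ hu₀pos
  have hminmax : fmin ≤ fmax := by
    have h1 : marg f u₀ S₀ ≤ marg f u₀ ∅ := marg_anti f hmono hsub u₀ (Finset.empty_subset S₀)
    have h2 : marg f u₀ ∅ ≤ fmax := by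
      rw [hfmax]; exact Finset.le_sup' (fun u : V => marg f u ∅) (Finset.mem_univ u₀)
    rw [← hu₀eq]
    linarith
  have hL0 : 0 ≤ Real.log (fmax / fmin) := Real.log_nonneg ((one_le_div hfminpos).mpr hminmax)
  have hpreffull : pref (⇑π) (Fintype.card V) = Finset.univ := pref_full ⇑π π.surjective
  have hfiltereq : (Finset.univ.filter fun j : Fin (Fintype.card V) => 0 < mff f ⇑π j)
      = Finset.univ.filter fun j : Fin (Fintype.card V) => 0 < mff f ⇑π j ∧ (j : ℕ) < Fintype.card V := by
    apply Finset.filter_congr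
    intro j _
    simp [j.isLt]
  have part1 : f ((Finset.univ.filter fun i : Fin (Fintype.card V) => 0 < mff f ⇑π i).image ⇑π)
      = f Finset.univ := by
    rw [hfiltereq, cover_eq f hmono hsub hf0 ⇑π (Fintype.card V) le_rfl, hpreffull]
  refine ⟨part1, ?_⟩
  intro Sstar hSstar
  set g : ℕ → ℝ := gainF f ⇑π with hg
  set pr : ℕ → ℝ := priceF f ⇑π c with hpr
  set q : ℕ → ℝ := runq g pr γ with hq
  set L : ℝ := Real.log (fmax / fmin) + 1 with hL
  set D : ℕ → ℝ := fun i => f Finset.univ - f (pref ⇑π i) with hD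
  have hq0 : q 0 = 0 := by rw [hq]; rfl
  have hqnn : ∀ i, 0 ≤ q i := by intro i; rw [hq]; exact runq_nonneg i
  have hqmono : ∀ i, q i ≤ q (i + 1) := by intro i; rw [hq]; exact runq_succ_le i
  -- rewrite the cost sum
  rw [Finset.sum_image (fun x _ y _ h => π.injective h), Finset.sum_filter]
  set gc : ℕ → ℝ :=
    fun i => if h : i < Fintype.card V then (if 0 < mff f ⇑π ⟨i, h⟩ then c (π ⟨i, h⟩) else 0) else 0 with hgc
  have hsum1 : (∑ i : Fin (Fintype.card V), if 0 < mff f ⇑π i then c (π i) else 0)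
      = ∑ i ∈ Finset.range (Fintype.card V), gc i := by
    rw [← Fin.sum_univ_eq_sum_range]
    apply Finset.sum_congr rfl
    intro i _
    rw [hgc]
    simp only [Fin.is_lt, dif_pos, Fin.eta]
  have hgival : ∀ (i : ℕ) (h : i < Fintype.card V), g i = mff f ⇑π ⟨i, h⟩ := by
    intro i h; rw [hg]; unfold gainF; rw [dif_pos h]
  have hstep1 : ∀ i ∈ Finset.range (Fintype.card V), gc i ≤ γ * (q (i + 1) * g i) := by
    intro i hi
    rw [Finset.mem_range] at hi
    rw [hgc]
    simp only [dif_pos hi]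
    have hgnn : 0 ≤ g i := by rw [hg]; exact gainF_nonneg f hmono ⇑π i
    by_cases hpos : 0 < mff f ⇑π ⟨i, hi⟩
    · rw [if_pos hpos]
      have hgi : g i = mff f ⇑π ⟨i, hi⟩ := hgival i hi
      have hpi : pr i = c (π ⟨i, hi⟩) / mff f ⇑π ⟨i, hi⟩ := by
        rw [hpr]; unfold priceF; rw [dif_pos hi]
      have h1 : pr i / γ ≤ q (i + 1) := by
        rw [hq, hpr, hg]
        exact le_runq (Nat.lt_succ_self i) (by rw [← hg, hgi]; exact hpos)
      have h2 : c (π ⟨i, hi⟩) = pr i * g i := by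
        rw [hpi, hgi]
        field_simp
      have h3 : pr i ≤ γ * q (i + 1) := by
        rw [div_le_iff₀ hγpos] at h1
        linarith [mul_comm (q (i + 1)) γ]
      rw [h2]
      calc pr i * g i ≤ (γ * q (i + 1)) * g i := mul_le_mul_of_nonneg_right h3 hgnn
        _ = γ * (q (i + 1) * g i) := by ring
    · rw [if_neg hpos]
      exact mul_nonneg hγpos.le (mul_nonneg (hqnn _) hgnn)
  have hDdiff : ∀ i ∈ Finset.range (Fintype.card V), q (i + 1) * g i = q (i + 1) * (D i - D (i + 1)) := by
    intro i hi
    rw [Finset.mem_range] at hi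
    congr 1
    have h4 : f (pref ⇑π (i + 1)) = f (pref ⇑π i) + mff f ⇑π ⟨i, hi⟩ := by
      rw [pref_succ ⇑π i hi]
      have hmfe : mff f ⇑π ⟨i, hi⟩ = marg f (π ⟨i, hi⟩) (pref ⇑π i) := rfl
      rw [hmfe]
      unfold marg; ring
    rw [hgival i hi]
    simp only [hD]
    linarith
  have habel : ∑ i ∈ Finset.range (Fintype.card V), q (i + 1) * (D i - D (i + 1))
      = ∑ i ∈ Finset.range (Fintype.card V), (q (i + 1) - q i) * D i := by
    rw [abel_sum]
    have hDn : D (Fintype.card V) = 0 := by simp only [hD]; rw [hpreffull]; ring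
    rw [hq0, hDn]
    ring
  have hDle : ∀ i : ℕ, D i ≤ ∑ u ∈ Sstar, marg f u (pref ⇑π i) := by
    intro i
    have h5 : f Finset.univ ≤ f (Sstar ∪ pref ⇑π i) := by
      rw [← hSstar]
      exact hmono _ _ Finset.subset_union_left
    have h6 := union_sub_le_sum f hmono hsub (pref ⇑π i) Sstar
    simp only [hD]
    linarith
  have hchain2 : ∑ i ∈ Finset.range (Fintype.card V), (q (i + 1) - q i) * D i
      ≤ ∑ i ∈ Finset.range (Fintype.card V), (q (i + 1) - q i) * ∑ u ∈ Sstar, marg f u (pref ⇑π i) :=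
    Finset.sum_le_sum fun i _ =>
      mul_le_mul_of_nonneg_left (hDle i) (sub_nonneg.mpr (hqmono i))
  have hswap : ∑ i ∈ Finset.range (Fintype.card V), (q (i + 1) - q i) * ∑ u ∈ Sstar, marg f u (pref ⇑π i)
      = ∑ u ∈ Sstar, ∑ i ∈ Finset.range (Fintype.card V), (q (i + 1) - q i) * marg f u (pref ⇑π i) := by
    simp_rw [Finset.mul_sum]
    rw [Finset.sum_comm]
  have hperu : ∀ u ∈ Sstar,
      ∑ i ∈ Finset.range (Fintype.card V), (q (i + 1) - q i) * marg f u (pref ⇑π i) ≤ c u * L := by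
    intro u _
    have hgun : marg f u (pref ⇑π (Fintype.card V)) = 0 := by
      rw [hpreffull]
      unfold marg
      rw [Finset.insert_eq_self.mpr (Finset.mem_univ u)]
      ring
    have habel2 : ∑ i ∈ Finset.range (Fintype.card V), (q (i + 1) - q i) * marg f u (pref ⇑π i)
        = ∑ i ∈ Finset.range (Fintype.card V),
            q (i + 1) * (marg f u (pref ⇑π i) - marg f u (pref ⇑π (i + 1))) := by
      rw [abel_sum q (fun i => marg f u (pref ⇑π i)) (Fintype.card V), hq0, hgun]
      ring
    rw [habel2]
    have h7 : ∑ i ∈ Finset.range (Fintype.card V),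
        q (i + 1) * (marg f u (pref ⇑π i) - marg f u (pref ⇑π (i + 1)))
        ≤ ∑ i ∈ Finset.range (Fintype.card V),
            c u * (phiF fmin (marg f u (pref ⇑π i)) - phiF fmin (marg f u (pref ⇑π (i + 1)))) := by
      apply Finset.sum_le_sum
      intro i _
      have hs := step_bound f hmono hsub ⇑π c hc hγpos hfminpos hfmin_le hgreedy u i
      rw [← hg, ← hpr, ← hq] at hs
      exact hs
    have h8 : ∑ i ∈ Finset.range (Fintype.card V),
        c u * (phiF fmin (marg f u (pref ⇑π i)) - phiF fmin (marg f u (pref ⇑π (i + 1))))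
        = c u * (phiF fmin (marg f u (pref ⇑π 0)) - phiF fmin (marg f u (pref ⇑π (Fintype.card V)))) := by
      rw [← Finset.mul_sum, Finset.sum_range_sub' (fun i => phiF fmin (marg f u (pref ⇑π i))) (Fintype.card V)]
    have hphin : phiF fmin (marg f u (pref ⇑π (Fintype.card V))) = 0 := by
      rw [hgun]
      unfold phiF
      rw [if_neg (not_le.mpr hfminpos)]
    have hphi0 : phiF fmin (marg f u (pref ⇑π 0)) ≤ L := by
      rw [pref_zero]
      by_cases hm : fmin ≤ marg f u ∅
      · unfold phiF
        rw [if_pos hm, hL]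
        have hle : marg f u ∅ ≤ fmax := by
          rw [hfmax]; exact Finset.le_sup' (fun u : V => marg f u ∅) (Finset.mem_univ u)
        have hpos0 : 0 < marg f u ∅ := lt_of_lt_of_le hfminpos hm
        have hlog : Real.log (marg f u ∅ / fmin) ≤ Real.log (fmax / fmin) := by
          have hdiv : marg f u ∅ / fmin ≤ fmax / fmin := (div_le_div_iff_of_pos_right hfminpos).mpr hle
          have hdp : (0:ℝ) < marg f u ∅ / fmin := div_pos hpos0 hfminpos
          exact Real.log_le_log hdp hdiv
        linarith
      · unfold phiF
        rw [if_neg hm, hL]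
        linarith
    calc ∑ i ∈ Finset.range (Fintype.card V),
        q (i + 1) * (marg f u (pref ⇑π i) - marg f u (pref ⇑π (i + 1)))
        ≤ c u * (phiF fmin (marg f u (pref ⇑π 0)) - phiF fmin (marg f u (pref ⇑π (Fintype.card V)))) := by
          rw [← h8]; exact h7
      _ = c u * phiF fmin (marg f u (pref ⇑π 0)) := by rw [hphin]; ring
      _ ≤ c u * L := mul_le_mul_of_nonneg_left hphi0 (hc u).le
  calc (∑ i : Fin (Fintype.card V), if 0 < mff f ⇑π i then c (π i) else 0)
      = ∑ i ∈ Finset.range (Fintype.card V), gc i := hsum1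
    _ ≤ ∑ i ∈ Finset.range (Fintype.card V), γ * (q (i + 1) * g i) := Finset.sum_le_sum hstep1
    _ = γ * ∑ i ∈ Finset.range (Fintype.card V), q (i + 1) * g i := by rw [Finset.mul_sum]
    _ = γ * ∑ i ∈ Finset.range (Fintype.card V), q (i + 1) * (D i - D (i + 1)) := by
        congr 1; exact Finset.sum_congr rfl hDdiff
    _ = γ * ∑ i ∈ Finset.range (Fintype.card V), (q (i + 1) - q i) * D i := by rw [habel]
    _ ≤ γ * ∑ i ∈ Finset.range (Fintype.card V), (q (i + 1) - q i) * ∑ u ∈ Sstar, marg f u (pref ⇑π i) :=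
        mul_le_mul_of_nonneg_left hchain2 hγpos.le
    _ = γ * ∑ u ∈ Sstar, ∑ i ∈ Finset.range (Fintype.card V), (q (i + 1) - q i) * marg f u (pref ⇑π i) := by
        rw [hswap]
    _ ≤ γ * ∑ u ∈ Sstar, c u * L :=
        mul_le_mul_of_nonneg_left (Finset.sum_le_sum hperu) hγpos.le
    _ = γ * L * ∑ u ∈ Sstar, c u := by rw [← Finset.sum_mul]; ring
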